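/- For q ≥ 2, L ≥ 2, the function g_{q,L}(w) = f_{q,L}(w/(q−1), ..., w/(q−1), 1−w) is non-increasing on [0, (q−1)/q] and non-decreasing on [(q−1)/q, 1]. -/

import Mathlib

open Finset

/-- The plurality of a tuple of symbols. -/
def plur {q L : ℕ} (x : Fin L → Fin q) : ℕ :=
  Finset.univ.sup fun a : Fin q => (Finset.univ.filter fun i => x i = a).card

/-- `f_{q,L}(P)`: the expected plurality of `L` i.i.d. samples from `P`. -/
noncomputable def fqL (q L : ℕ) (P : Fin q → ℝ) : ℝ :=
  ∑ x : Fin L → Fin q, (∏ i, P (x i)) * (plur x : ℝ)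

/-- The distribution `P_{q,w} = (w/(q−1), ..., w/(q−1), 1−w)`. -/
noncomputable def PqW (q : ℕ) (w : ℝ) : Fin q → ℝ :=
  fun i => if (i : ℕ) = q - 1 then 1 - w else w / ((q : ℝ) - 1)

def cnt {q n : ℕ} (y : Fin n → Fin q) (b : Fin q) : ℕ :=
  (Finset.univ.filter fun j => y j = b).card

lemma plur_eq {q n : ℕ} (y : Fin n → Fin q) : plur y = Finset.univ.sup (cnt y) := rfl

lemma cnt_le_plur {q n : ℕ} (y : Fin n → Fin q) (b : Fin q) : cnt y b ≤ plur y :=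
  Finset.le_sup (mem_univ b)

/-- max-count after adding one more sample with value `b`. -/
def Mx {q n : ℕ} (b : Fin q) (y : Fin n → Fin q) : ℕ := max (cnt y b + 1) (plur y)

lemma cnt_comp {q n : ℕ} (σ : Fin q ≃ Fin q) (y : Fin n → Fin q) (b : Fin q) :
    cnt (fun j => σ (y j)) b = cnt y (σ.symm b) := by
  unfold cnt
  congr 1
  ext j
  simp [Equiv.eq_symm_apply]

lemma plur_comp {q n : ℕ} (σ : Fin q ≃ Fin q) (y : Fin n → Fin q) :
    plur (fun j => σ (y j)) = plur y := by
  rw [plur_eq, plur_eq]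
  apply le_antisymm
  · apply Finset.sup_le
    intro b _
    rw [cnt_comp]
    exact Finset.le_sup (mem_univ _)
  · apply Finset.sup_le
    intro b _
    have : cnt y b = cnt (fun j => σ (y j)) (σ b) := by rw [cnt_comp, Equiv.symm_apply_apply]
    rw [this]
    exact Finset.le_sup (mem_univ _)

lemma prod_cnt {q n : ℕ} (P : Fin q → ℝ) (y : Fin n → Fin q) :
    ∏ j, P (y j) = ∏ b, P b ^ cnt y b := by
  rw [← Finset.prod_fiberwise_of_maps_to (fun j (_ : j ∈ univ) => mem_univ (y j)) (fun j => P (y j))]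
  refine Finset.prod_congr rfl fun b _ => ?_
  rw [show (∏ j ∈ univ.filter fun j => y j = b, P (y j)) = ∏ j ∈ univ.filter fun j => y j = b, P b from
    Finset.prod_congr rfl fun j hj => by rw [(Finset.mem_filter.1 hj).2]]
  rw [Finset.prod_const, cnt]

lemma cnt_insertNth {q n : ℕ} (i : Fin (n+1)) (b : Fin q) (y : Fin n → Fin q) (c : Fin q) :
    cnt (i.insertNth b y) c = (if b = c then 1 else 0) + cnt y c := by
  unfold cnt
  rw [Finset.card_filter, Finset.card_filter, Fin.sum_univ_succAbove _ i,
    Fin.insertNth_apply_same]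
  congr 1
  refine Finset.sum_congr rfl fun j _ => ?_
  rw [Fin.insertNth_apply_succAbove]

lemma plur_insertNth {q n : ℕ} (i : Fin (n+1)) (b : Fin q) (y : Fin n → Fin q) :
    plur (i.insertNth b y) = Mx b y := by
  rw [plur_eq, Mx]
  apply le_antisymm
  · apply Finset.sup_le
    intro c _
    rw [cnt_insertNth]
    by_cases h : b = c
    · subst h
      rw [if_pos rfl]
      exact le_max_of_le_left (by omega)
    · simp only [if_neg h, zero_add]
      exact le_max_of_le_right (cnt_le_plur y c)
  · apply max_le
    · have := Finset.le_sup (f := cnt (i.insertNth b y)) (mem_univ b)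
      rw [cnt_insertNth, if_pos rfl] at this
      omega
    · rw [plur_eq]
      apply Finset.sup_mono_fun
      intro c _
      rw [cnt_insertNth]
      omega

lemma prod_erase_univ {n : ℕ} (i : Fin (n+1)) (f : Fin (n+1) → ℝ) :
    ∏ j ∈ univ.erase i, f j = ∏ j, f (i.succAbove j) := by
  rw [show univ.erase i = Finset.image i.succAbove univ by
    ext j
    simp [Fin.exists_succAbove_eq_iff, eq_comm]]
  rw [Finset.prod_image (fun a _ b _ h => Fin.succAbove_right_injective h)]

lemma swap_prod_le {q n : ℕ} (P : Fin q → ℝ) (hP : ∀ b, 0 ≤ P b) (a c : Fin q) (hac : a ≠ c)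
    (hpr : P a ≤ P c) (y : Fin n → Fin q) (hcnt : cnt y c ≤ cnt y a) :
    ∏ j, P (y j) ≤ ∏ j, P (Equiv.swap a c (y j)) := by
  have h1 : (∏ j, P (Equiv.swap a c (y j))) = ∏ b, P (Equiv.swap a c b) ^ cnt y b := by
    rw [prod_cnt P (fun j => Equiv.swap a c (y j)),
      ← Equiv.prod_comp (Equiv.swap a c) (fun b => P (Equiv.swap a c b) ^ cnt y b)]
    refine Finset.prod_congr rfl fun b _ => ?_
    rw [Equiv.swap_apply_self, cnt_comp, Equiv.symm_swap]
  rw [prod_cnt P y, h1]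
  have hc : c ∈ univ.erase a := Finset.mem_erase.2 ⟨hac.symm, mem_univ c⟩
  rw [← Finset.mul_prod_erase univ _ (mem_univ a), ← Finset.mul_prod_erase _ _ hc,
    ← Finset.mul_prod_erase univ (fun b => P (Equiv.swap a c b) ^ cnt y b) (mem_univ a),
    ← Finset.mul_prod_erase _ (fun b => P (Equiv.swap a c b) ^ cnt y b) hc]
  have hK : (∏ b ∈ (univ.erase a).erase c, P (Equiv.swap a c b) ^ cnt y b)
      = ∏ b ∈ (univ.erase a).erase c, P b ^ cnt y b := by
    refine Finset.prod_congr rfl fun b hb => ?_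
    rw [Finset.mem_erase, Finset.mem_erase] at hb
    rw [Equiv.swap_apply_of_ne_of_ne hb.2.1 hb.1]
  rw [hK, Equiv.swap_apply_left, Equiv.swap_apply_right]
  set A := cnt y a with hA
  set B := cnt y c with hB
  set K := ∏ b ∈ (univ.erase a).erase c, P b ^ cnt y b with hKdef
  have hKnn : 0 ≤ K := Finset.prod_nonneg fun b _ => pow_nonneg (hP b) _
  obtain ⟨d, hd⟩ : ∃ d, A = B + d := ⟨A - B, by omega⟩
  rw [hd, pow_add, pow_add]
  have hpd : P a ^ d ≤ P c ^ d := pow_le_pow_left₀ (hP a) hpr d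
  have hbase : (0:ℝ) ≤ P a ^ B * P c ^ B * K :=
    mul_nonneg (mul_nonneg (pow_nonneg (hP a) _) (pow_nonneg (hP c) _)) hKnn
  calc P a ^ B * P a ^ d * (P c ^ B * K) = (P a ^ B * P c ^ B * K) * P a ^ d := by ring
    _ ≤ (P a ^ B * P c ^ B * K) * P c ^ d := mul_le_mul_of_nonneg_left hpd hbase
    _ = P c ^ B * P c ^ d * (P a ^ B * K) := by ring

lemma U_le {q n : ℕ} (P : Fin q → ℝ) (hP : ∀ b, 0 ≤ P b) (a c : Fin q) (hac : a ≠ c)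
    (hpr : P a ≤ P c) :
    ∑ y : Fin n → Fin q, ((Mx a y : ℝ) - (Mx c y : ℝ)) * ∏ j, P (y j) ≤ 0 := by
  set σ := Equiv.swap a c with hσ
  set F : (Fin n → Fin q) → ℝ := fun y => ((Mx a y : ℝ) - (Mx c y : ℝ)) * ∏ j, P (y j) with hF
  set e : (Fin n → Fin q) ≃ (Fin n → Fin q) := Equiv.arrowCongr (Equiv.refl (Fin n)) σ with he
  have he_apply : ∀ y j, e y j = σ (y j) := fun y j => rfl
  have hMa : ∀ y : Fin n → Fin q, Mx a (e y) = Mx c y := by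
    intro y
    have : e y = fun j => σ (y j) := funext (he_apply y)
    rw [this]
    unfold Mx
    rw [cnt_comp, plur_comp, hσ, Equiv.symm_swap, Equiv.swap_apply_left]
  have hMc : ∀ y : Fin n → Fin q, Mx c (e y) = Mx a y := by
    intro y
    have : e y = fun j => σ (y j) := funext (he_apply y)
    rw [this]
    unfold Mx
    rw [cnt_comp, plur_comp, hσ, Equiv.symm_swap, Equiv.swap_apply_right]
  have reidx : ∑ y : Fin n → Fin q, F y = ∑ y : Fin n → Fin q, F (e y) :=
    (Equiv.sum_comp e F).symm
  have key : ∀ y : Fin n → Fin q, F y + F (e y) ≤ 0 := by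
    intro y
    have hwe : (∏ j, P (e y j)) = ∏ j, P (σ (y j)) := by
      refine Finset.prod_congr rfl fun j _ => by rw [he_apply]
    have expand : F y + F (e y)
        = ((Mx a y : ℝ) - (Mx c y : ℝ)) * ((∏ j, P (y j)) - ∏ j, P (σ (y j))) := by
      rw [hF]
      simp only []
      rw [hMa y, hMc y, hwe]
      ring
    rw [expand]
    rcases lt_trichotomy (cnt y a) (cnt y c) with h | h | h
    · -- cnt a < cnt c : first factor ≤ 0, second ≥ 0
      have h1 : Mx a y ≤ Mx c y := max_le_max (by omega) le_rfl
      have h2 : (∏ j, P (σ (y j))) ≤ ∏ j, P (y j) := by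
        have := swap_prod_le P hP a c hac hpr (fun j => σ (y j))
          (by rw [cnt_comp, cnt_comp, hσ, Equiv.symm_swap, Equiv.swap_apply_left,
                Equiv.swap_apply_right]; omega)
        calc (∏ j, P (σ (y j))) ≤ ∏ j, P (σ (σ (y j))) := this
          _ = ∏ j, P (y j) := by
              refine Finset.prod_congr rfl fun j _ => by rw [hσ, Equiv.swap_apply_self]
      exact mul_nonpos_of_nonpos_of_nonneg (by have := Nat.cast_le (α := ℝ) |>.2 h1; linarith)
        (by linarith)
    · -- equal
      have : Mx a y = Mx c y := by unfold Mx; omega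
      rw [this]; simp
    · -- cnt c < cnt a
      have h1 : Mx c y ≤ Mx a y := max_le_max (by omega) le_rfl
      have h2 : (∏ j, P (y j)) ≤ ∏ j, P (σ (y j)) :=
        swap_prod_le P hP a c hac hpr y (by omega)
      exact mul_nonpos_of_nonneg_of_nonpos (by have := Nat.cast_le (α := ℝ) |>.2 h1; linarith)
        (by linarith)
  have sum2 : (∑ y : Fin n → Fin q, F y) + (∑ y : Fin n → Fin q, F y) ≤ 0 := by
    nth_rewrite 2 [reidx]
    rw [← Finset.sum_add_distrib]
    exact Finset.sum_nonpos fun y _ => key y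
  linarith


noncomputable def dq (q : ℕ) (b : Fin q) : ℝ :=
  if (b : ℕ) = q - 1 then -1 else 1 / ((q : ℝ) - 1)

lemma hasDerivAt_PqW (q : ℕ) (b : Fin q) (w : ℝ) :
    HasDerivAt (fun w => PqW q w b) (dq q b) w := by
  unfold PqW dq
  by_cases h : (b : ℕ) = q - 1
  · simp only [if_pos h]
    simpa using (hasDerivAt_id w).const_sub 1
  · simp only [if_neg h]
    simpa [one_div] using (hasDerivAt_id w).div_const ((q:ℝ) - 1)

lemma hasDerivAt_g (q L : ℕ) (w : ℝ) :
    HasDerivAt (fun w => fqL q L (PqW q w))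
      (∑ x : Fin L → Fin q,
        (∑ i, (∏ j ∈ univ.erase i, PqW q w (x j)) * dq q (x i)) * (plur x : ℝ)) w := by
  simp only [fqL]
  apply HasDerivAt.fun_sum
  intro x _
  have hp := HasDerivAt.fun_finsetProd (u := univ) (f := fun i w => PqW q w (x i))
    (f' := fun i => dq q (x i)) (x := w) (fun i _ => hasDerivAt_PqW q (x i) w)
  simpa [smul_eq_mul] using hp.mul_const ((plur x : ℝ))

lemma stepA (m n : ℕ) (w : ℝ) :
    ∑ x : Fin (n+1) → Fin (m+1),
        (∑ i, (∏ j ∈ univ.erase i, PqW (m+1) w (x j)) * dq (m+1) (x i)) * (plur x : ℝ)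
    = (n+1 : ℝ) * ∑ b, dq (m+1) b *
        ∑ y : Fin n → Fin (m+1), (Mx b y : ℝ) * ∏ j, PqW (m+1) w (y j) := by
  simp only [Finset.sum_mul]
  rw [Finset.sum_comm]
  have inner : ∀ i : Fin (n+1),
      (∑ x : Fin (n+1) → Fin (m+1),
        (∏ j ∈ univ.erase i, PqW (m+1) w (x j)) * dq (m+1) (x i) * (plur x : ℝ))
      = ∑ b, dq (m+1) b * ∑ y : Fin n → Fin (m+1), (Mx b y : ℝ) * ∏ j, PqW (m+1) w (y j) := by
    intro i
    rw [← Equiv.sum_comp (Fin.insertNthEquiv (fun _ => Fin (m+1)) i)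
        (fun x => (∏ j ∈ univ.erase i, PqW (m+1) w (x j)) * dq (m+1) (x i) * (plur x : ℝ)),
      Fintype.sum_prod_type]
    refine Finset.sum_congr rfl fun b _ => ?_
    rw [Finset.mul_sum]
    refine Finset.sum_congr rfl fun y _ => ?_
    have h1 : (Fin.insertNthEquiv (fun _ => Fin (m+1)) i) (b, y) = i.insertNth b y := rfl
    rw [h1, prod_erase_univ]
    have h2 : (∏ j : Fin n, PqW (m+1) w ((Fin.insertNth (α := fun _ => Fin (m+1)) i b y) (i.succAbove j)))
        = ∏ j : Fin n, PqW (m+1) w (y j) := by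
      refine Finset.prod_congr rfl fun j _ => ?_
      rw [Fin.insertNth_apply_succAbove]
    rw [h2, Fin.insertNth_apply_same, plur_insertNth]
    ring
  rw [Finset.sum_congr rfl (fun i _ => inner i)]
  rw [Finset.sum_const, card_univ, Fintype.card_fin, nsmul_eq_mul]
  push_cast
  ring

lemma stepB (m : ℕ) (hm : 1 ≤ m) (G : Fin (m+1) → ℝ) :
    ∑ b, dq (m+1) b * G b
      = (1/(m:ℝ)) * ∑ a ∈ univ.erase (Fin.last m), (G a - G (Fin.last m)) := by
  rw [← Finset.add_sum_erase _ _ (mem_univ (Fin.last m))]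
  have hdlast : dq (m+1) (Fin.last m) = -1 := by simp [dq]
  have hd : ∀ a ∈ univ.erase (Fin.last m), dq (m+1) a * G a = (1/(m:ℝ)) * G a := by
    intro a ha
    have hne : (a : ℕ) ≠ m := by
      intro h
      exact (Finset.mem_erase.1 ha).1 (Fin.ext (by simp [h]))
    have : dq (m+1) a = 1/(m:ℝ) := by
      unfold dq
      rw [if_neg (by simpa using hne)]
      push_cast
      ring_nf
    rw [this]
  rw [Finset.sum_congr rfl hd, hdlast]
  rw [Finset.sum_sub_distrib, Finset.sum_const,
    Finset.card_erase_of_mem (mem_univ _), card_univ, Fintype.card_fin]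
  have hm0 : (m:ℝ) ≠ 0 := Nat.cast_ne_zero.2 (by omega)
  simp only [Nat.add_sub_cancel, nsmul_eq_mul]
  rw [mul_sub, Finset.mul_sum]
  have hml : (1:ℝ)/m * ((m:ℝ) * G (Fin.last m)) = G (Fin.last m) := by field_simp
  rw [hml]
  ring

noncomputable def Dexp (q L : ℕ) (w : ℝ) : ℝ :=
  ∑ x : Fin L → Fin q,
    (∑ i, (∏ j ∈ univ.erase i, PqW q w (x j)) * dq q (x i)) * (plur x : ℝ)

lemma hasDerivAt_g' (q L : ℕ) (w : ℝ) :
    HasDerivAt (fun w => fqL q L (PqW q w)) (Dexp q L w) w := hasDerivAt_g q L w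

lemma Dexp_eq (m n : ℕ) (hm : 1 ≤ m) (w : ℝ) :
    Dexp (m+1) (n+1) w = ((n+1 : ℝ)/(m:ℝ)) * ∑ a ∈ univ.erase (Fin.last m),
      ∑ y : Fin n → Fin (m+1),
        ((Mx a y : ℝ) - (Mx (Fin.last m) y : ℝ)) * ∏ j, PqW (m+1) w (y j) := by
  rw [Dexp, stepA,
    stepB m hm (fun b => ∑ y : Fin n → Fin (m+1), (Mx b y : ℝ) * ∏ j, PqW (m+1) w (y j))]
  have hinner : ∀ a : Fin (m+1),
      (∑ y : Fin n → Fin (m+1),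
        ((Mx a y : ℝ) - (Mx (Fin.last m) y : ℝ)) * ∏ j, PqW (m+1) w (y j))
      = (∑ y : Fin n → Fin (m+1), (Mx a y : ℝ) * ∏ j, PqW (m+1) w (y j))
        - (∑ y : Fin n → Fin (m+1), (Mx (Fin.last m) y : ℝ) * ∏ j, PqW (m+1) w (y j)) := by
    intro a
    rw [← Finset.sum_sub_distrib]
    exact Finset.sum_congr rfl fun y _ => by ring
  rw [Finset.sum_congr rfl fun a (_ : a ∈ univ.erase (Fin.last m)) => hinner a]
  ring

lemma PqW_nonneg (m : ℕ) (w : ℝ) (h0 : 0 ≤ w) (h1 : w ≤ 1) (b : Fin (m+1)) :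
    0 ≤ PqW (m+1) w b := by
  unfold PqW
  split
  · linarith
  · apply div_nonneg h0
    have : ((m+1:ℕ):ℝ) - 1 = (m:ℝ) := by push_cast; ring
    rw [this]
    positivity

lemma PqW_last (m : ℕ) (w : ℝ) : PqW (m+1) w (Fin.last m) = 1 - w := by simp [PqW]

lemma PqW_other (m : ℕ) (w : ℝ) (a : Fin (m+1)) (ha : a ≠ Fin.last m) :
    PqW (m+1) w a = w / (m:ℝ) := by
  have hne : (a : ℕ) ≠ m := fun h => ha (Fin.ext (by simp [h]))
  unfold PqW
  rw [if_neg (by simpa using hne)]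
  have : ((m+1:ℕ):ℝ) - 1 = (m:ℝ) := by push_cast; ring
  rw [this]

lemma Dexp_nonpos (m n : ℕ) (hm : 1 ≤ m) (w : ℝ) (h0 : 0 ≤ w) (h1 : w ≤ 1)
    (hpr : w / (m:ℝ) ≤ 1 - w) : Dexp (m+1) (n+1) w ≤ 0 := by
  rw [Dexp_eq m n hm w]
  have hmm : (0:ℝ) < m := by exact_mod_cast Nat.pos_of_ne_zero (by omega)
  apply mul_nonpos_of_nonneg_of_nonpos (by positivity)
  apply Finset.sum_nonpos
  intro a ha
  have hane : a ≠ Fin.last m := (Finset.mem_erase.1 ha).1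
  exact U_le (PqW (m+1) w) (PqW_nonneg m w h0 h1) a (Fin.last m) hane
    (by rw [PqW_other m w a hane, PqW_last]; exact hpr)

lemma Dexp_nonneg (m n : ℕ) (hm : 1 ≤ m) (w : ℝ) (h0 : 0 ≤ w) (h1 : w ≤ 1)
    (hpr : 1 - w ≤ w / (m:ℝ)) : 0 ≤ Dexp (m+1) (n+1) w := by
  rw [Dexp_eq m n hm w]
  have hmm : (0:ℝ) < m := by exact_mod_cast Nat.pos_of_ne_zero (by omega)
  apply mul_nonneg (by positivity)
  apply Finset.sum_nonneg
  intro a ha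
  have hane : a ≠ Fin.last m := (Finset.mem_erase.1 ha).1
  have h := U_le (n := n) (PqW (m+1) w) (PqW_nonneg m w h0 h1) (Fin.last m) a hane.symm
    (by rw [PqW_other m w a hane, PqW_last]; exact hpr)
  have hneg : (∑ y : Fin n → Fin (m+1),
      ((Mx a y : ℝ) - (Mx (Fin.last m) y : ℝ)) * ∏ j, PqW (m+1) w (y j))
      = - ∑ y : Fin n → Fin (m+1),
        ((Mx (Fin.last m) y : ℝ) - (Mx a y : ℝ)) * ∏ j, PqW (m+1) w (y j) := by
    rw [← Finset.sum_neg_distrib]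
    exact Finset.sum_congr rfl fun y _ => by ring
  rw [hneg]
  linarith

theorem stmt10 (q L : ℕ) (hq : 2 ≤ q) (hL : 2 ≤ L) :
    AntitoneOn (fun w => fqL q L (PqW q w)) (Set.Icc (0 : ℝ) (((q : ℝ) - 1) / q)) ∧
    MonotoneOn (fun w => fqL q L (PqW q w)) (Set.Icc (((q : ℝ) - 1) / q) 1) := by
  obtain ⟨m, rfl⟩ : ∃ m, q = m + 1 := ⟨q - 1, by omega⟩
  obtain ⟨n, rfl⟩ : ∃ n, L = n + 1 := ⟨L - 1, by omega⟩
  have hm : 1 ≤ m := by omega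
  have hmm : (0:ℝ) < m := by exact_mod_cast Nat.pos_of_ne_zero (by omega)
  have hc : (((m+1:ℕ):ℝ) - 1) / ((m+1:ℕ):ℝ) = (m:ℝ)/((m:ℝ)+1) := by push_cast; ring
  have hcpos : 0 < (m:ℝ)/((m:ℝ)+1) := by positivity
  have hclt1 : (m:ℝ)/((m:ℝ)+1) < 1 := by rw [div_lt_one (by positivity)]; linarith
  rw [hc]
  constructor
  · apply antitoneOn_of_deriv_nonpos (convex_Icc _ _)
    · exact fun w _ => (hasDerivAt_g' (m+1) (n+1) w).continuousAt.continuousWithinAt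
    · rw [interior_Icc]
      exact fun w _ =>
        (hasDerivAt_g' (m+1) (n+1) w).differentiableAt.differentiableWithinAt
    · rw [interior_Icc]
      intro w hw
      obtain ⟨hw0, hw1⟩ := hw
      rw [(hasDerivAt_g' (m+1) (n+1) w).deriv]
      have hwm : w * ((m:ℝ)+1) < m := by
        rw [← lt_div_iff₀ (by positivity)]; exact hw1
      apply Dexp_nonpos m n hm w hw0.le (by nlinarith) ?_
      rw [div_le_iff₀ hmm]
      nlinarith
  · apply monotoneOn_of_deriv_nonneg (convex_Icc _ _)
    · exact fun w _ => (hasDerivAt_g' (m+1) (n+1) w).continuousAt.continuousWithinAt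
    · rw [interior_Icc]
      exact fun w _ =>
        (hasDerivAt_g' (m+1) (n+1) w).differentiableAt.differentiableWithinAt
    · rw [interior_Icc]
      intro w hw
      obtain ⟨hw0, hw1⟩ := hw
      rw [(hasDerivAt_g' (m+1) (n+1) w).deriv]
      have hwm : (m:ℝ) < w * ((m:ℝ)+1) := by
        rw [← div_lt_iff₀ (by positivity)]; exact hw0
      apply Dexp_nonneg m n hm w (by nlinarith) hw1.le ?_
      rw [le_div_iff₀ hmm]
      nlinarith
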